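/- Let C ⊆ L0+ be convex and bounded. Then there exists a probability measure Q on (Ω, F), equivalent to P, such that sup_{f ∈ C} E_Q[f] < ∞. -/

import Mathlib

open MeasureTheory Filter Set

noncomputable section

variable {Ω : Type*} [MeasurableSpace Ω]

/-- The nonnegative orthant `L⁰₊` of the space `L⁰` of (a.e.-equivalence classes of)
random variables over `(Ω, ℱ, P)`. -/
def L0plus (P : Measure Ω) : Set (Ω →ₘ[P] ℝ) := {f | 0 ≤ f}

/-- The metric `(f, g) ↦ E[1 ∧ |f - g|]` inducing the topology of convergence
in probability on `L⁰`. -/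
def dist0 (P : Measure Ω) (f g : Ω →ₘ[P] ℝ) : ℝ :=
  ∫ ω, min 1 |f ω - g ω| ∂P

/-- Convergence in probability of a sequence in `L⁰`. -/
def Tendsto0 (P : Measure Ω) (f : ℕ → Ω →ₘ[P] ℝ) (g : Ω →ₘ[P] ℝ) : Prop :=
  Tendsto (fun n => dist0 P (f n) g) atTop (nhds 0)

/-- Closure of a set in `L⁰` with respect to the topology of convergence in probability. -/
def closure0 (P : Measure Ω) (C : Set (Ω →ₘ[P] ℝ)) : Set (Ω →ₘ[P] ℝ) :=
  {f | ∀ ε : ℝ, 0 < ε → ∃ g ∈ C, dist0 P f g < ε}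

/-- A set of `L⁰` is closed iff it contains its closure. -/
def IsClosed0 (P : Measure Ω) (C : Set (Ω →ₘ[P] ℝ)) : Prop :=
  closure0 P C ⊆ C

/-- Boundedness (in probability) of a set `C ⊆ L⁰₊` : `lim_{ℓ → ∞} sup_{f ∈ C} P[f > ℓ] = 0`. -/
def Bounded0 (P : Measure Ω) (C : Set (Ω →ₘ[P] ℝ)) : Prop :=
  Tendsto (fun ℓ : ℝ => ⨆ f ∈ C, P {ω | ℓ < f ω}) atTop (nhds 0)

/-- The set `C^max` of maximal elements of `C ⊆ L⁰₊` : `f ∈ C` such that `f ≤ g` a.s.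
and `g ∈ C` imply `f = g` a.s. -/
def maxSet (P : Measure Ω) (C : Set (Ω →ₘ[P] ℝ)) : Set (Ω →ₘ[P] ℝ) :=
  {f | f ∈ C ∧ ∀ g ∈ C, f ≤ g → f = g}

/-- `C` is max-closed if every maximal element of its closure already belongs to `C`. -/
def MaxClosed (P : Measure Ω) (C : Set (Ω →ₘ[P] ℝ)) : Prop :=
  maxSet P (closure0 P C) ⊆ C

/-- The pairing `⟨μ, f⟩ = ∫ f dμ ∈ [0, ∞]` between a nonnegative measure `μ` and `f ∈ L⁰₊`. -/
def pairing {P : Measure Ω} (μ : Measure Ω) (f : Ω →ₘ[P] ℝ) : ENNReal :=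
  ∫⁻ ω, ENNReal.ofReal (f ω) ∂μ

/-- The set `C^osp` of outer support points of `C ⊆ L⁰₊`: points `g ∈ C^max` for which there
is a σ-finite nonnegative measure `μ ≪ P` with `0 < sup_{f ∈ C} ⟨μ, f⟩ = ⟨μ, g⟩ < ∞`;
by convention `{0}^osp = {0}`. -/
def osp (P : Measure Ω) (C : Set (Ω →ₘ[P] ℝ)) : Set (Ω →ₘ[P] ℝ) :=
  {g | g ∈ maxSet P C ∧
    (C = {0} ∨ ∃ μ : Measure Ω, μ ≪ P ∧ SigmaFinite μ ∧
      0 < pairing μ g ∧ pairing μ g < ⊤ ∧ (⨆ f ∈ C, pairing μ f) = pairing μ g)}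

/-- The solid hull of `C ⊆ L⁰₊`. -/
def solidHull (P : Measure Ω) (C : Set (Ω →ₘ[P] ℝ)) : Set (Ω →ₘ[P] ℝ) :=
  {f | f ∈ L0plus P ∧ ∃ g ∈ C, f ≤ g}

/-- A set `S ⊆ L⁰₊` is solid if `g ∈ S` and `0 ≤ f ≤ g` imply `f ∈ S`. -/
def Solid (P : Measure Ω) (S : Set (Ω →ₘ[P] ℝ)) : Prop :=
  ∀ g ∈ S, ∀ f : Ω →ₘ[P] ℝ, 0 ≤ f → f ≤ g → f ∈ S

/-- `(g n)` is a sequence of forward convex combinations of `(f n)`. -/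
def ForwardConvexComb (P : Measure Ω) (f g : ℕ → Ω →ₘ[P] ℝ) : Prop :=
  ∀ n : ℕ, g n ∈ convexHull ℝ (f '' Set.Ici n)

end

section Aux

open scoped ENNReal

namespace Statement10Aux

variable {Ω : Type*} [MeasurableSpace Ω] {P : MeasureTheory.Measure Ω}

open MeasureTheory

lemma exists_level {C : Set (Ω →ₘ[P] ℝ)} (hbdd : Bounded0 P C)
    {ε : ℝ≥0∞} (hε : 0 < ε) : ∃ ℓ : ℝ, 0 ≤ ℓ ∧ ∀ f ∈ C, P {ω | ℓ < f ω} < ε := by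
  have h1 : ∀ᶠ ℓ : ℝ in Filter.atTop, (⨆ f ∈ C, P {ω | ℓ < f ω}) < ε :=
    hbdd.eventually_lt_const hε
  obtain ⟨ℓ, hℓ1, hℓ2⟩ := (h1.and (Filter.eventually_ge_atTop (0:ℝ))).exists
  exact ⟨ℓ, hℓ2, fun f hf =>
    lt_of_le_of_lt (le_iSup₂ (f := fun f (_ : f ∈ C) => P {ω | ℓ < f ω}) f hf) hℓ1⟩

lemma coe_nonneg {C : Set (Ω →ₘ[P] ℝ)} (hCL0 : C ⊆ L0plus P) {f : Ω →ₘ[P] ℝ} (hf : f ∈ C) :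
    ∀ᵐ ω ∂P, 0 ≤ f ω := by
  have h1 : ((0 : Ω →ₘ[P] ℝ) : Ω → ℝ) ≤ᵐ[P] f := AEEqFun.coeFn_le.2 (hCL0 hf)
  filter_upwards [h1, AEEqFun.coeFn_zero (β := ℝ) (μ := P)] with ω h2 h3
  rw [h3] at h2; exact h2

lemma memL2_aux {C : Set (Ω →ₘ[P] ℝ)} (hCL0 : C ⊆ L0plus P) [IsProbabilityMeasure P]
    {f : Ω →ₘ[P] ℝ} (hf : f ∈ C) (c : ℕ) {B : Set Ω} (hB : MeasurableSet B) :
    MemLp (B.indicator fun ω => min (f ω) (c:ℝ)) 2 P := by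
  refine MemLp.of_bound (((f.aemeasurable.min aemeasurable_const).aestronglyMeasurable).indicator hB)
    (c:ℝ) ?_
  filter_upwards [coe_nonneg hCL0 hf] with ω hω
  rw [Real.norm_eq_abs, abs_le]
  by_cases hωB : ω ∈ B
  · rw [Set.indicator_of_mem hωB]
    exact ⟨le_trans (neg_nonpos.2 (Nat.cast_nonneg c)) (le_min hω (Nat.cast_nonneg c)),
      min_le_right _ _⟩
  · rw [Set.indicator_of_notMem hωB]
    exact ⟨neg_nonpos.2 (Nat.cast_nonneg c), Nat.cast_nonneg c⟩

lemma key [IsProbabilityMeasure P] {C : Set (Ω →ₘ[P] ℝ)} (hCne : C.Nonempty)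
    (hCL0 : C ⊆ L0plus P) (hconv : Convex ℝ C) (hbdd : Bounded0 P C)
    {A : Set Ω} (hA : MeasurableSet A) (hApos : 0 < P A) :
    ∃ h : Ω → ℝ≥0∞, Measurable h ∧ (∀ ω, ω ∉ A → h ω = 0) ∧ 0 < P {ω | 0 < h ω} ∧
      (∫⁻ ω, h ω ∂P) ≤ 1 ∧ ∀ f ∈ C, (∫⁻ ω, ENNReal.ofReal (f ω) * h ω ∂P) ≤ 1 := by
  obtain ⟨ℓ, hℓ0, hℓ⟩ := exists_level hbdd (ENNReal.half_pos hApos.ne')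
  -- the set T of truncated, localized elements of C, inside L²
  set T : Set (Lp ℝ 2 P) := {x | ∃ f ∈ C, ∃ c : ℕ, ∃ B, MeasurableSet B ∧ B ⊆ A ∧
    (x : Ω → ℝ) =ᵐ[P] B.indicator fun ω => min (f ω) (c:ℝ)} with hTdef
  have h0T : (0 : Lp ℝ 2 P) ∈ T := by
    obtain ⟨f, hf⟩ := hCne
    refine ⟨f, hf, 0, ∅, MeasurableSet.empty, Set.empty_subset A, ?_⟩
    filter_upwards [Lp.coeFn_zero (E := ℝ) (p := 2) (μ := P)] with ω hω
    rw [hω, Set.indicator_of_notMem (Set.notMem_empty ω)]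
    rfl
  -- every element of the convex hull of T is a.e. dominated by an element of C
  have hdom : ∀ x ∈ convexHull ℝ T, ∃ f ∈ C, (x : Ω → ℝ) ≤ᵐ[P] f := by
    have hsub : T ⊆ {x : Lp ℝ 2 P | ∃ f ∈ C, (x : Ω → ℝ) ≤ᵐ[P] f} := by
      rintro x ⟨f, hf, c, B, hB, hBA, hx⟩
      refine ⟨f, hf, ?_⟩
      filter_upwards [hx, coe_nonneg hCL0 hf] with ω h1 h2
      rw [h1]
      by_cases hω : ω ∈ B
      · rw [Set.indicator_of_mem hω]; exact min_le_left _ _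
      · rw [Set.indicator_of_notMem hω]; exact h2
    have hconvS : Convex ℝ {x : Lp ℝ 2 P | ∃ f ∈ C, (x : Ω → ℝ) ≤ᵐ[P] f} := by
      rintro x ⟨f, hf, hxf⟩ y ⟨g, hg, hyg⟩ a b ha hb hab
      refine ⟨a • f + b • g, hconv hf hg ha hb hab, ?_⟩
      filter_upwards [hxf, hyg, Lp.coeFn_add (a • x) (b • y), Lp.coeFn_smul a x,
        Lp.coeFn_smul b y, AEEqFun.coeFn_add (a • f) (b • g), AEEqFun.coeFn_smul a f,
        AEEqFun.coeFn_smul b g] with ω h1 h2 h3 h4 h5 h6 h7 h8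
      rw [h3, h6]
      simp only [Pi.add_apply, Pi.smul_apply, smul_eq_mul] at *
      rw [h4, h5, h7, h8]
      exact add_le_add (mul_le_mul_of_nonneg_left h1 ha) (mul_le_mul_of_nonneg_left h2 hb)
    exact fun x hx => convexHull_min hsub hconvS hx
  -- tail bound on the closed convex hull K of T
  set K := closure (convexHull ℝ T) with hKdef
  have hKconv : Convex ℝ K := (convex_convexHull ℝ T).closure
  have hKtail : ∀ x ∈ K, P {ω | ℓ + 1 < x ω} ≤ P A / 2 := by
    intro x hx
    refine ENNReal.le_of_forall_pos_le_add fun ε hε _ => ?_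
    set δ : ℝ := min 1 (ε : ℝ) with hδdef
    have hδpos : 0 < δ := lt_min one_pos hε
    obtain ⟨y, hyT, hyd⟩ := Metric.mem_closure_iff.1 hx δ hδpos
    obtain ⟨f, hf, _⟩ := hdom y hyT
    have hsub2 : {ω | ℓ + 1 < x ω} ⊆
        {ω | (1:ℝ≥0∞) ≤ ‖x ω - y ω‖₊} ∪ {ω | ℓ < y ω} := by
      intro ω hω
      by_cases hy : ℓ < y ω
      · exact Or.inr hy
      · refine Or.inl ?_
        have h1 : (1:ℝ) ≤ ‖x ω - y ω‖ := by
          rw [Real.norm_eq_abs, le_abs]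
          left; push_neg at hy
          have : ℓ + 1 < x ω := hω
          linarith
        calc (1:ℝ≥0∞) = ENNReal.ofReal 1 := by simp
          _ ≤ ENNReal.ofReal ‖x ω - y ω‖ := ENNReal.ofReal_le_ofReal h1
          _ = (‖x ω - y ω‖₊ : ℝ≥0∞) := ofReal_norm _
    have hmarkov : P {ω | (1:ℝ≥0∞) ≤ ‖x ω - y ω‖₊} ≤ ENNReal.ofReal (ε:ℝ) := by
      have hms : AEStronglyMeasurable (fun ω => x ω - y ω) P :=
        (Lp.aestronglyMeasurable x).sub (Lp.aestronglyMeasurable y)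
      have h1 := meas_ge_le_mul_pow_eLpNorm_enorm P (p := 2) two_ne_zero ENNReal.ofNat_ne_top hms
        (ε := 1) one_ne_zero (fun h => absurd h ENNReal.one_ne_top)
      have h2 : eLpNorm (fun ω => x ω - y ω) 2 P = ENNReal.ofReal ‖x - y‖ := by
        have he : (fun ω => x ω - y ω) =ᵐ[P] ⇑(x - y) := by
          filter_upwards [Lp.coeFn_sub x y] with ω hω
          rw [hω]
          rfl
        rw [eLpNorm_congr_ae he, Lp.norm_def, ENNReal.ofReal_toReal (Lp.eLpNorm_ne_top _)]
      rw [h2] at h1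
      refine le_trans h1 ?_
      have htr : (2:ℝ≥0∞).toReal = 2 := by simp
      rw [htr]
      simp only [inv_one, ENNReal.one_rpow, one_mul]
      have hd : ‖x - y‖ < δ := by rwa [dist_eq_norm] at hyd
      have hnn : (0:ℝ) ≤ ‖x - y‖ := norm_nonneg _
      rw [ENNReal.ofReal_rpow_of_nonneg hnn (by norm_num : (0:ℝ) ≤ 2)]
      refine ENNReal.ofReal_le_ofReal ?_
      have h2' : ‖x - y‖ ^ (2:ℝ) = ‖x - y‖ * ‖x - y‖ := by
        rw [show (2:ℝ) = ((2:ℕ):ℝ) by norm_num, Real.rpow_natCast]; ring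
      rw [h2']
      have hδ1 : δ ≤ 1 := min_le_left _ _
      have hδε : δ ≤ (ε:ℝ) := min_le_right _ _
      nlinarith
    calc P {ω | ℓ + 1 < x ω} ≤ P ({ω | (1:ℝ≥0∞) ≤ ‖x ω - y ω‖₊} ∪ {ω | ℓ < y ω}) :=
          measure_mono hsub2
      _ ≤ P {ω | (1:ℝ≥0∞) ≤ ‖x ω - y ω‖₊} + P {ω | ℓ < y ω} := measure_union_le _ _
      _ ≤ ENNReal.ofReal (ε:ℝ) + P A / 2 := by
          refine add_le_add hmarkov ?_
          obtain ⟨f, hf, hyf⟩ := hdom y hyT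
          refine le_trans (measure_mono_ae ?_) (hℓ f hf).le
          filter_upwards [hyf] with ω h1 h2
          exact lt_of_lt_of_le h2 h1
      _ = P A / 2 + ε := by rw [ENNReal.ofReal_coe_nnreal, add_comm]
  -- the point to separate
  set b : ℝ := ℓ + 2 with hbdef
  set x₀ : Lp ℝ 2 P := indicatorConstLp 2 hA (measure_ne_top P A) b with hx₀def
  have hx₀K : x₀ ∉ K := by
    intro hx
    have h1 := hKtail x₀ hx
    have h2 : P A ≤ P {ω | ℓ + 1 < x₀ ω} := by
      refine measure_mono_ae ?_
      filter_upwards [indicatorConstLp_coeFn (p := 2) (hs := hA)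
        (hμs := measure_ne_top P A) (c := b)] with ω hω hωA
      have : x₀ ω = b := by rw [hω, Set.indicator_of_mem hωA]
      show ℓ + 1 < x₀ ω
      rw [this, hbdef]; linarith
    exact absurd (h2.trans h1) (not_le.2 (ENNReal.half_lt_self hApos.ne' (measure_ne_top P A)))
  obtain ⟨φ, u, hφK, hφx₀⟩ := geometric_hahn_banach_closed_point hKconv isClosed_closure hx₀K
  set h2 : Lp ℝ 2 P := (InnerProductSpace.toDual ℝ (Lp ℝ 2 P)).symm φ with hh2def
  have hφ : ∀ z : Lp ℝ 2 P, φ z = ∫ ω, h2 ω * z ω ∂P := by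
    intro z
    have h := InnerProductSpace.toDual_symm_apply (𝕜 := ℝ) (E := Lp ℝ 2 P) (x := z) (y := φ)
    rw [L2.inner_def] at h
    simp only [RCLike.inner_apply, starRingEnd_apply, star_trivial] at h
    rw [← h]
    exact integral_congr_ae (ae_of_all _ fun ω => mul_comm _ _)
  have hu0 : 0 < u := by
    have := hφK 0 (subset_closure (subset_convexHull ℝ T h0T))
    rwa [map_zero] at this
  -- measurable representative of h2
  have hh2m : AEMeasurable (h2 : Ω → ℝ) P := (Lp.aestronglyMeasurable h2).aemeasurable
  set h₀ : Ω → ℝ := hh2m.mk _ with hh₀def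
  have hh₀meas : Measurable h₀ := hh2m.measurable_mk
  have hh₀ae : (h2 : Ω → ℝ) =ᵐ[P] h₀ := hh2m.ae_eq_mk
  set B : Set Ω := A ∩ {ω | 0 < h₀ ω} with hBdef
  have hBmeas : MeasurableSet B := hA.inter (measurableSet_lt measurable_const hh₀meas)
  -- key integral bound on truncations localized to B
  have hTbound : ∀ f ∈ C, ∀ c : ℕ,
      (∫ ω, h2 ω * (B.indicator (fun ω => min (f ω) (c:ℝ)) ω) ∂P) < u := by
    intro f hf c
    set x := MemLp.toLp _ (memL2_aux hCL0 hf c hBmeas) with hxdef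
    have hx : x ∈ T := ⟨f, hf, c, B, hBmeas, Set.inter_subset_left,
      MemLp.coeFn_toLp (memL2_aux hCL0 hf c hBmeas)⟩
    have h1 := hφK x (subset_closure (subset_convexHull ℝ T hx))
    rw [hφ x] at h1
    refine lt_of_le_of_lt (le_of_eq (integral_congr_ae ?_)) h1
    filter_upwards [MemLp.coeFn_toLp (memL2_aux hCL0 hf c hBmeas)] with ω hω
    rw [hω]
  -- the candidate density (unnormalized)
  set D : Ω → ℝ≥0∞ := fun ω => A.indicator (fun ω => ENNReal.ofReal (h₀ ω)) ω with hDdef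
  have hDmeas : Measurable D := (ENNReal.measurable_ofReal.comp hh₀meas).indicator hA
  have hC1 : ∀ f ∈ C, ∀ c : ℕ,
      (∫⁻ ω, ENNReal.ofReal (min (f ω) (c:ℝ)) * D ω ∂P) ≤ ENNReal.ofReal u := by
    intro f hf c
    have hI : Integrable (h2 : Ω → ℝ) P := (Lp.memLp h2).integrable (by norm_num)
    have hint : Integrable (fun ω => h2 ω * (B.indicator (fun ω => min (f ω) (c:ℝ)) ω)) P := by
      have h1 : Integrable (fun ω => (B.indicator (fun ω => min (f ω) (c:ℝ)) ω) * h2 ω) P := by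
        refine hI.bdd_mul (c := (c:ℝ))
          ((f.aemeasurable.min aemeasurable_const).aestronglyMeasurable.indicator hBmeas) ?_
        filter_upwards [coe_nonneg hCL0 hf] with ω hω
        rw [Real.norm_eq_abs, abs_le]
        by_cases hωB : ω ∈ B
        · rw [Set.indicator_of_mem hωB]
          exact ⟨le_trans (neg_nonpos.2 (Nat.cast_nonneg c)) (le_min hω (Nat.cast_nonneg c)),
            min_le_right _ _⟩
        · rw [Set.indicator_of_notMem hωB]
          exact ⟨neg_nonpos.2 (Nat.cast_nonneg c), Nat.cast_nonneg c⟩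
      refine h1.congr (ae_of_all _ fun ω => ?_)
      ring
    have hnn : 0 ≤ᵐ[P] fun ω => h2 ω * (B.indicator (fun ω => min (f ω) (c:ℝ)) ω) := by
      filter_upwards [hh₀ae, coe_nonneg hCL0 hf] with ω h1 h2'
      by_cases hω : ω ∈ B
      · rw [Set.indicator_of_mem hω]
        exact mul_nonneg (h1 ▸ hω.2.le) (le_min h2' (Nat.cast_nonneg c))
      · rw [Set.indicator_of_notMem hω, mul_zero]
        exact le_rfl
    have heq := ofReal_integral_eq_lintegral_ofReal hint hnn
    have hae : (fun ω => ENNReal.ofReal (min (f ω) (c:ℝ)) * D ω) =ᵐ[P]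
        fun ω => ENNReal.ofReal (h2 ω * (B.indicator (fun ω => min (f ω) (c:ℝ)) ω)) := by
      filter_upwards [hh₀ae, coe_nonneg hCL0 hf] with ω h1 h2'
      have hminnn : 0 ≤ min (f ω) (c:ℝ) := le_min h2' (Nat.cast_nonneg c)
      by_cases hωA : ω ∈ A
      · by_cases hωh : 0 < h₀ ω
        · have hωB : ω ∈ B := ⟨hωA, hωh⟩
          simp only [hDdef]
          rw [Set.indicator_of_mem hωB, Set.indicator_of_mem hωA, h1,
            mul_comm (h₀ ω), ENNReal.ofReal_mul hminnn]
        · have hωB : ω ∉ B := fun hc => hωh hc.2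
          simp only [hDdef]
          rw [Set.indicator_of_notMem hωB, mul_zero, ENNReal.ofReal_zero,
            Set.indicator_of_mem hωA, ENNReal.ofReal_of_nonpos (not_lt.1 hωh), mul_zero]
      · have hωB : ω ∉ B := fun hc => hωA hc.1
        simp only [hDdef]
        rw [Set.indicator_of_notMem hωA, mul_zero, Set.indicator_of_notMem hωB,
          mul_zero, ENNReal.ofReal_zero]
    rw [lintegral_congr_ae hae, ← heq]
    exact ENNReal.ofReal_le_ofReal (hTbound f hf c).le
  -- monotone convergence in the truncation level
  have hC2 : ∀ f ∈ C, (∫⁻ ω, ENNReal.ofReal (f ω) * D ω ∂P) ≤ ENNReal.ofReal u := by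
    intro f hf
    have hsup : ∀ ω, (⨆ c : ℕ, ENNReal.ofReal (min (f ω) (c:ℝ)) * D ω)
        = ENNReal.ofReal (f ω) * D ω := by
      intro ω
      rw [← ENNReal.iSup_mul]
      congr 1
      refine le_antisymm (iSup_le fun c => ENNReal.ofReal_le_ofReal (min_le_left _ _)) ?_
      refine le_iSup_of_le ⌈f ω⌉₊ (ENNReal.ofReal_le_ofReal ?_)
      exact le_min le_rfl (Nat.le_ceil _)
    calc (∫⁻ ω, ENNReal.ofReal (f ω) * D ω ∂P)
        = ∫⁻ ω, ⨆ c : ℕ, ENNReal.ofReal (min (f ω) (c:ℝ)) * D ω ∂P :=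
          lintegral_congr fun ω => (hsup ω).symm
      _ = ⨆ c : ℕ, ∫⁻ ω, ENNReal.ofReal (min (f ω) (c:ℝ)) * D ω ∂P := by
          refine lintegral_iSup' (fun c => ?_) (ae_of_all _ fun ω i j hij => ?_)
          · exact ((ENNReal.measurable_ofReal.comp_aemeasurable
              (f.aemeasurable.min aemeasurable_const)).mul hDmeas.aemeasurable)
          · exact mul_le_mul_left
              (ENNReal.ofReal_le_ofReal (min_le_min le_rfl (Nat.cast_le.2 hij))) _
      _ ≤ ENNReal.ofReal u := iSup_le fun c => hC1 f hf c
  -- finiteness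
  have hDfin : (∫⁻ ω, D ω ∂P) < ⊤ := by
    have hI : Integrable h₀ P := ((Lp.memLp h2).integrable (by norm_num)).congr hh₀ae
    refine lt_of_le_of_lt (lintegral_mono fun ω => ?_) hI.lintegral_lt_top
    refine le_trans (Set.indicator_le_self _ _ ω) ?_
    exact le_rfl
  -- positivity
  have hDpos : 0 < P {ω | 0 < D ω} := by
    by_contra hcon
    push_neg at hcon
    have h0 : P {ω | 0 < D ω} = 0 := le_antisymm hcon (zero_le)
    have hnm : ∀ᵐ ω ∂P, ω ∉ {ω | 0 < D ω} := measure_eq_zero_iff_ae_notMem.1 h0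
    have hφx₀' : φ x₀ ≤ 0 := by
      rw [hφ x₀]
      refine integral_nonpos_of_ae ?_
      filter_upwards [hnm, hh₀ae, indicatorConstLp_coeFn (p := 2) (hs := hA)
        (hμs := measure_ne_top P A) (c := b)] with ω h1 h2' h3
      show h2 ω * x₀ ω ≤ 0
      by_cases hωA : ω ∈ A
      · rw [h3, Set.indicator_of_mem hωA]
        have hD0' : D ω = 0 := le_antisymm (not_lt.1 h1) (zero_le)
        have hor : ENNReal.ofReal (h₀ ω) = 0 := by
          simpa [hDdef, Set.indicator_of_mem hωA] using hD0'
        have hh0 : h₀ ω ≤ 0 := ENNReal.ofReal_eq_zero.1 hor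
        rw [h2']
        have hb0 : 0 < b := by rw [hbdef]; linarith
        nlinarith
      · rw [h3, Set.indicator_of_notMem hωA, mul_zero]
    linarith [hφx₀, hu0]
  -- scaling
  set M := ∫⁻ ω, D ω ∂P with hM
  have hMne : M ≠ ⊤ := hDfin.ne
  set U := ENNReal.ofReal u with hU
  have hUne : U ≠ ⊤ := ENNReal.ofReal_ne_top
  have hden_ne_top : M + U + 1 ≠ ⊤ := by
    simp [ENNReal.add_eq_top, hMne, hUne]
  have hden_ne_zero : M + U + 1 ≠ 0 := by simp
  set cst : ℝ≥0∞ := (M + U + 1)⁻¹ with hcst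
  have hcst0 : cst ≠ 0 := ENNReal.inv_ne_zero.2 hden_ne_top
  have hcstt : cst ≠ ⊤ := ENNReal.inv_ne_top.2 hden_ne_zero
  have hcancel : cst * (M + U + 1) = 1 := ENNReal.inv_mul_cancel hden_ne_zero hden_ne_top
  refine ⟨fun ω => cst * D ω, hDmeas.const_mul cst, ?_, ?_, ?_, ?_⟩
  · intro ω hω
    simp [hDdef, Set.indicator_of_notMem hω]
  · have hset : {ω | 0 < cst * D ω} = {ω | 0 < D ω} := by
      ext ω
      simp only [Set.mem_setOf_eq, pos_iff_ne_zero, Ne, mul_eq_zero, hcst0, false_or]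
    rwa [hset]
  · rw [lintegral_const_mul' cst _ hcstt]
    calc cst * M ≤ cst * (M + U + 1) :=
          mul_le_mul_right (le_trans le_self_add le_self_add) _
      _ = 1 := hcancel
  · intro f hf
    have heq : (fun ω => ENNReal.ofReal (f ω) * (cst * D ω))
        = fun ω => cst * (ENNReal.ofReal (f ω) * D ω) := by
      funext ω; ring
    rw [heq, lintegral_const_mul' cst _ hcstt]
    calc cst * ∫⁻ ω, ENNReal.ofReal (f ω) * D ω ∂P ≤ cst * (M + U + 1) := by
          refine mul_le_mul_right (le_trans (hC2 f hf) ?_) _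
          exact le_trans le_add_self le_self_add
      _ = 1 := hcancel

end Statement10Aux

end Aux

open scoped ENNReal NNReal

/-- If `C ⊆ L⁰₊` is convex and bounded, then there exists a probability
measure `Q` equivalent to `P` with `sup_{f ∈ C} E_Q[f] < ∞`. -/
theorem statement10 {Ω : Type*} [MeasurableSpace Ω] (P : Measure Ω) [IsProbabilityMeasure P]
    (C : Set (Ω →ₘ[P] ℝ)) (hCL0 : C ⊆ L0plus P)
    (hconv : Convex ℝ C) (hbdd : Bounded0 P C) :
    ∃ Q : Measure Ω, IsProbabilityMeasure Q ∧ Q ≪ P ∧ P ≪ Q ∧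
      (⨆ f ∈ C, pairing Q f) < ⊤ := by
  rcases C.eq_empty_or_nonempty with hC | hCne
  · subst hC
    exact ⟨P, inferInstance, Measure.AbsolutelyContinuous.rfl, Measure.AbsolutelyContinuous.rfl,
      by simp⟩
  classical
  set Hp : (Ω → ℝ≥0∞) → Prop := fun h => Measurable h ∧ (∫⁻ ω, h ω ∂P) ≤ 1 ∧
    ∀ f ∈ C, (∫⁻ ω, ENNReal.ofReal (f ω) * h ω ∂P) ≤ 1 with hHpdef
  have hHp0 : Hp 0 := ⟨measurable_const, by simp, fun f hf => by simp⟩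
  set p : ℝ≥0∞ := ⨆ h : {h : Ω → ℝ≥0∞ // Hp h}, P {ω | 0 < h.1 ω} with hpdef
  have hple : p ≤ 1 := iSup_le fun h => prob_le_one
  have hsup_le : ∀ h : Ω → ℝ≥0∞, Hp h → P {ω | 0 < h ω} ≤ p := fun h hh =>
    le_iSup (fun h : {h : Ω → ℝ≥0∞ // Hp h} => P {ω | 0 < h.1 ω}) ⟨h, hh⟩
  have hex : ∀ n : ℕ, ∃ h : Ω → ℝ≥0∞, Hp h ∧ p ≤ P {ω | 0 < h ω} + ((n : ℝ≥0∞) + 1)⁻¹ := by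
    intro n
    by_cases hp0 : p = 0
    · exact ⟨0, hHp0, by simp [hp0]⟩
    · have hlt : p - ((n : ℝ≥0∞) + 1)⁻¹ < p :=
        ENNReal.sub_lt_self (lt_of_le_of_lt hple ENNReal.one_lt_top).ne hp0
          (ENNReal.inv_ne_zero.2 (by simp))
      rw [hpdef] at hlt
      obtain ⟨⟨h, hh⟩, hlt2⟩ := lt_iSup_iff.1 hlt
      exact ⟨h, hh, tsub_le_iff_right.1 hlt2.le⟩
  choose hs hsH hsP using hex
  set hstar : Ω → ℝ≥0∞ := fun ω => ∑' n : ℕ, (2 : ℝ≥0∞)⁻¹ ^ (n + 1) * hs n ω with hstar_def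
  have hs_meas : ∀ n, Measurable (hs n) := fun n => (hsH n).1
  have hstar_meas : Measurable hstar :=
    Measurable.ennreal_tsum fun n => ((hs_meas n).const_mul _)
  have hpow_ne_top : ∀ n : ℕ, (2 : ℝ≥0∞)⁻¹ ^ (n + 1) ≠ ⊤ := fun n =>
    ENNReal.pow_ne_top (by simp)
  have hpow_ne_zero : ∀ n : ℕ, (2 : ℝ≥0∞)⁻¹ ^ (n + 1) ≠ 0 := fun n =>
    pow_ne_zero _ (ENNReal.inv_ne_zero.2 ENNReal.ofNat_ne_top)
  have hgeom : (∑' n : ℕ, (2 : ℝ≥0∞)⁻¹ ^ (n + 1)) = 1 := by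
    have h1 : ∀ n : ℕ, (2 : ℝ≥0∞)⁻¹ ^ (n + 1) = (2 : ℝ≥0∞)⁻¹ ^ n * 2⁻¹ := fun n => pow_succ _ _
    simp_rw [h1]
    rw [ENNReal.tsum_mul_right, ENNReal.tsum_geometric, ENNReal.one_sub_inv_two, inv_inv]
    exact ENNReal.mul_inv_cancel two_ne_zero ENNReal.ofNat_ne_top
  have hstar_H : Hp hstar := by
    refine ⟨hstar_meas, ?_, ?_⟩
    · rw [hstar_def]
      rw [lintegral_tsum fun n => ((hs_meas n).const_mul _).aemeasurable]
      calc (∑' n : ℕ, ∫⁻ ω, (2 : ℝ≥0∞)⁻¹ ^ (n + 1) * hs n ω ∂P)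
          = ∑' n : ℕ, (2 : ℝ≥0∞)⁻¹ ^ (n + 1) * ∫⁻ ω, hs n ω ∂P :=
            tsum_congr fun n => lintegral_const_mul' _ _ (hpow_ne_top n)
        _ ≤ ∑' n : ℕ, (2 : ℝ≥0∞)⁻¹ ^ (n + 1) * 1 :=
            ENNReal.tsum_le_tsum fun n => mul_le_mul_right (hsH n).2.1 _
        _ = 1 := by simpa using hgeom
    · intro f hf
      have h1 : ∀ ω, ENNReal.ofReal (f ω) * hstar ω
          = ∑' n : ℕ, (2 : ℝ≥0∞)⁻¹ ^ (n + 1) * (ENNReal.ofReal (f ω) * hs n ω) := by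
        intro ω
        rw [hstar_def, ← ENNReal.tsum_mul_left]
        exact tsum_congr fun n => by ring
      calc (∫⁻ ω, ENNReal.ofReal (f ω) * hstar ω ∂P)
          = ∫⁻ ω, ∑' n : ℕ, (2 : ℝ≥0∞)⁻¹ ^ (n + 1) * (ENNReal.ofReal (f ω) * hs n ω) ∂P :=
            lintegral_congr h1
        _ = ∑' n : ℕ, ∫⁻ ω, (2 : ℝ≥0∞)⁻¹ ^ (n + 1) * (ENNReal.ofReal (f ω) * hs n ω) ∂P :=
            lintegral_tsum fun n => (((f.aemeasurable.ennreal_ofReal).mul (hs_meas n).aemeasurable).const_mul _)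
        _ = ∑' n : ℕ, (2 : ℝ≥0∞)⁻¹ ^ (n + 1) * ∫⁻ ω, ENNReal.ofReal (f ω) * hs n ω ∂P :=
            tsum_congr fun n => lintegral_const_mul' _ _ (hpow_ne_top n)
        _ ≤ ∑' n : ℕ, (2 : ℝ≥0∞)⁻¹ ^ (n + 1) * 1 :=
            ENNReal.tsum_le_tsum fun n => mul_le_mul_right ((hsH n).2.2 f hf) _
        _ = 1 := by simpa using hgeom
  have hstar_ge : p ≤ P {ω | 0 < hstar ω} := by
    refine ENNReal.le_of_forall_pos_le_add fun ε hε _ => ?_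
    obtain ⟨n, hn⟩ := ENNReal.exists_inv_nat_lt (a := (ε : ℝ≥0∞)) (by simpa using hε.ne')
    have hsubset : {ω | 0 < hs n ω} ⊆ {ω | 0 < hstar ω} := by
      intro ω hω
      have h1 : 0 < (2 : ℝ≥0∞)⁻¹ ^ (n + 1) * hs n ω :=
        ENNReal.mul_pos (hpow_ne_zero n) (pos_iff_ne_zero.1 hω)
      exact lt_of_lt_of_le h1 (ENNReal.le_tsum n)
    have hinv : ((n : ℝ≥0∞) + 1)⁻¹ ≤ ((n : ℝ≥0∞))⁻¹ :=
      ENNReal.inv_le_inv' le_self_add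
    calc p ≤ P {ω | 0 < hs n ω} + ((n : ℝ≥0∞) + 1)⁻¹ := hsP n
      _ ≤ P {ω | 0 < hstar ω} + (ε : ℝ≥0∞) :=
          add_le_add (measure_mono hsubset) (le_of_lt (lt_of_le_of_lt hinv hn))
  have haepos : ∀ᵐ ω ∂P, 0 < hstar ω := by
    rw [ae_iff]
    by_contra hcon
    have hAeq : {ω | ¬0 < hstar ω} = {ω | hstar ω = 0} := by
      ext ω; simp [pos_iff_ne_zero]
    rw [hAeq] at hcon
    have hAmeas : MeasurableSet {ω | hstar ω = 0} := hstar_meas (measurableSet_singleton 0)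
    have hApos : 0 < P {ω | hstar ω = 0} := pos_iff_ne_zero.2 hcon
    obtain ⟨ht, htmeas, htsupp, htpos, htint, htpair⟩ :=
      Statement10Aux.key hCne hCL0 hconv hbdd hAmeas hApos
    set h' : Ω → ℝ≥0∞ := fun ω => 2⁻¹ * hstar ω + 2⁻¹ * ht ω with hh'def
    have hh'H : Hp h' := by
      refine ⟨(hstar_meas.const_mul _).add (htmeas.const_mul _), ?_, ?_⟩
      · rw [hh'def]
        rw [lintegral_add_left (hstar_meas.const_mul _),
          lintegral_const_mul' _ _ (by simp : (2:ℝ≥0∞)⁻¹ ≠ ⊤),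
          lintegral_const_mul' _ _ (by simp : (2:ℝ≥0∞)⁻¹ ≠ ⊤)]
        calc 2⁻¹ * (∫⁻ ω, hstar ω ∂P) + 2⁻¹ * (∫⁻ ω, ht ω ∂P)
            ≤ 2⁻¹ * 1 + 2⁻¹ * 1 :=
              add_le_add (mul_le_mul_right hstar_H.2.1 _) (mul_le_mul_right htint _)
          _ = 1 := by
              simp [ENNReal.inv_two_add_inv_two]
      · intro f hf
        have h1 : ∀ ω, ENNReal.ofReal (f ω) * h' ω
            = 2⁻¹ * (ENNReal.ofReal (f ω) * hstar ω) + 2⁻¹ * (ENNReal.ofReal (f ω) * ht ω) := by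
          intro ω; rw [hh'def]; ring
        rw [lintegral_congr h1,
          lintegral_add_left' (f := fun ω => 2⁻¹ * (ENNReal.ofReal (f ω) * hstar ω)) (((f.aemeasurable.ennreal_ofReal).mul hstar_meas.aemeasurable).const_mul _),
          lintegral_const_mul' _ _ (by simp : (2:ℝ≥0∞)⁻¹ ≠ ⊤),
          lintegral_const_mul' _ _ (by simp : (2:ℝ≥0∞)⁻¹ ≠ ⊤)]
        calc 2⁻¹ * (∫⁻ ω, ENNReal.ofReal (f ω) * hstar ω ∂P)
              + 2⁻¹ * (∫⁻ ω, ENNReal.ofReal (f ω) * ht ω ∂P)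
            ≤ 2⁻¹ * 1 + 2⁻¹ * 1 :=
              add_le_add (mul_le_mul_right (hstar_H.2.2 f hf) _)
                (mul_le_mul_right (htpair f hf) _)
          _ = 1 := by
              simp [ENNReal.inv_two_add_inv_two]
    have hdisj : Disjoint {ω | 0 < hstar ω} {ω | 0 < ht ω} := by
      rw [Set.disjoint_left]
      intro ω h1 h2
      have h3 : ω ∈ {ω | hstar ω = 0} := by
        by_contra h4
        exact (pos_iff_ne_zero.1 h2) (htsupp ω h4)
      exact (pos_iff_ne_zero.1 h1) h3
    have hunion : {ω | 0 < h' ω} = {ω | 0 < hstar ω} ∪ {ω | 0 < ht ω} := by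
      ext ω
      simp only [Set.mem_setOf_eq, Set.mem_union, hh'def, pos_iff_ne_zero, Ne,
        add_eq_zero, mul_eq_zero, ENNReal.inv_eq_zero, ENNReal.ofNat_ne_top, false_or,
        not_and_or]
    have hPn : P {ω | 0 < h' ω} = P {ω | 0 < hstar ω} + P {ω | 0 < ht ω} := by
      rw [hunion]
      exact measure_union hdisj (measurableSet_lt measurable_const htmeas)
    have hplt : p < P {ω | 0 < h' ω} := by
      rw [hPn]
      exact lt_of_le_of_lt hstar_ge (ENNReal.lt_add_right (measure_ne_top P _) htpos.ne')
    exact absurd (hsup_le h' hh'H) (not_le.2 hplt)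
  set I := ∫⁻ ω, hstar ω ∂P with hIdef
  have hIne_top : I ≠ ⊤ := (lt_of_le_of_lt hstar_H.2.1 ENNReal.one_lt_top).ne
  have hIpos : I ≠ 0 := by
    intro h0
    have h1 := (lintegral_eq_zero_iff hstar_meas).1 h0
    have hbad : ∀ᵐ _ω ∂P, False := by
      filter_upwards [haepos, h1] with ω hω1 hω2
      rw [show hstar ω = 0 from hω2] at hω1
      exact lt_irrefl 0 hω1
    haveI : (MeasureTheory.ae P).NeBot := ae_neBot.2 (IsProbabilityMeasure.ne_zero P)
    obtain ⟨ω, hω⟩ := hbad.exists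
    exact hω
  set Q := P.withDensity (fun ω => I⁻¹ * hstar ω) with hQdef
  have hdens_meas : Measurable fun ω => I⁻¹ * hstar ω := hstar_meas.const_mul _
  have hQprob : IsProbabilityMeasure Q := by
    constructor
    rw [hQdef, withDensity_apply _ MeasurableSet.univ, Measure.restrict_univ,
      lintegral_const_mul' _ _ (ENNReal.inv_ne_top.2 hIpos)]
    exact ENNReal.inv_mul_cancel hIpos hIne_top
  have hQP : Q ≪ P := withDensity_absolutelyContinuous _ _
  have hPQ : P ≪ Q := by
    refine Measure.AbsolutelyContinuous.mk fun s hs' hQs => ?_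
    rw [hQdef, withDensity_apply _ hs'] at hQs
    have h0 := (setLIntegral_eq_zero_iff hs' hdens_meas).1 hQs
    refine measure_eq_zero_iff_ae_notMem.2 ?_
    filter_upwards [h0, haepos] with ω h1 h2
    intro hωs
    have h3 := h1 hωs
    rcases mul_eq_zero.1 h3 with h4 | h4
    · exact (ENNReal.inv_ne_zero.2 hIne_top) h4
    · exact h2.ne' h4
  refine ⟨Q, hQprob, hQP, hPQ, ?_⟩
  have hbound : ∀ f ∈ C, pairing Q f ≤ I⁻¹ := by
    intro f hf
    have hfm : AEMeasurable (fun ω => ENNReal.ofReal (f ω)) P :=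
      f.aemeasurable.ennreal_ofReal
    have h1 : pairing Q f = ∫⁻ ω, ENNReal.ofReal (f ω) ∂Q := rfl
    rw [h1, hQdef, lintegral_withDensity_eq_lintegral_mul₀ hdens_meas.aemeasurable hfm]
    have h2 : (∫⁻ ω, ((fun ω => I⁻¹ * hstar ω) * fun ω => ENNReal.ofReal (f ω)) ω ∂P)
        = ∫⁻ ω, I⁻¹ * (ENNReal.ofReal (f ω) * hstar ω) ∂P := by
      refine lintegral_congr fun ω => ?_
      simp only [Pi.mul_apply]
      ring
    rw [h2, lintegral_const_mul' _ _ (ENNReal.inv_ne_top.2 hIpos)]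
    calc I⁻¹ * ∫⁻ ω, ENNReal.ofReal (f ω) * hstar ω ∂P ≤ I⁻¹ * 1 :=
          mul_le_mul_right (hstar_H.2.2 f hf) _
      _ = I⁻¹ := mul_one _
  exact lt_of_le_of_lt (iSup₂_le hbound) (ENNReal.inv_lt_top.2 (pos_iff_ne_zero.2 hIpos))
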